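/- Let x₁ ≤ ⋯ ≤ xₙ be agent locations with positive weights wᵢ ∈ [w_min, w_max]. Let f be the median location x_{⌈n/2⌉}. Then for any y* ∈ ℝ, max_i wᵢ·|f − xᵢ| ≤ (1 + w_max/w_min)·max_i wᵢ·|y* − xᵢ|, and this bound is tight: for the instance with two agents x₁ = 0 of weight w_min and x₂ = 1 of weight w_max, the median (= leftmost) location 0 achieves objective w_max while the optimal objective equals w_max·w_min/(w_max + w_min), giving ratio exactly 1 + w_max/w_min. -/

import Mathlib

theorem stmt8 (n : ℕ) (hn : 0 < n) (x w : Fin n → ℝ) (hx : Monotone x)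
    (wmin wmax : ℝ) (hminpos : 0 < wmin)
    (hwb : ∀ i, wmin ≤ w i ∧ w i ≤ wmax)
    (hU : (Finset.univ : Finset (Fin n)).Nonempty) :
    (∀ ystar : ℝ,
      Finset.univ.sup' hU (fun i => w i * |x ⟨(n + 1) / 2 - 1, by omega⟩ - x i|)
        ≤ (1 + wmax / wmin) * Finset.univ.sup' hU (fun i => w i * |ystar - x i|)) ∧
    ((∀ y : ℝ, wmax * wmin / (wmax + wmin) ≤ max (wmin * |y - 0|) (wmax * |y - 1|)) ∧
      (∃ y : ℝ, max (wmin * |y - 0|) (wmax * |y - 1|) = wmax * wmin / (wmax + wmin)) ∧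
      max (wmin * |(0 : ℝ) - 0|) (wmax * |(0 : ℝ) - 1|) = wmax ∧
      wmax = (1 + wmax / wmin) * (wmax * wmin / (wmax + wmin))) := by
  have i0 : Fin n := ⟨0, hn⟩
  have hminmax : wmin ≤ wmax := le_trans (hwb i0).1 (hwb i0).2
  have hmaxpos : 0 < wmax := lt_of_lt_of_le hminpos hminmax
  have hspos : 0 < wmax + wmin := by linarith
  refine ⟨?_, ?_, ?_, ?_, ?_⟩
  · intro ystar
    set m : Fin n := ⟨(n + 1) / 2 - 1, by omega⟩
    set M := Finset.univ.sup' hU (fun i => w i * |ystar - x i|) with hMdef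
    have hMm : w m * |ystar - x m| ≤ M := by
      exact Finset.le_sup' (fun i => w i * |ystar - x i|) (Finset.mem_univ m)
    have hwm0 : 0 < w m := lt_of_lt_of_le hminpos (hwb m).1
    have hM0 : 0 ≤ M :=
      le_trans (mul_nonneg hwm0.le (abs_nonneg _)) hMm
    have hxm : |ystar - x m| ≤ M / wmin := by
      rw [le_div_iff₀ hminpos]
      calc |ystar - x m| * wmin = wmin * |ystar - x m| := by ring
        _ ≤ w m * |ystar - x m| := mul_le_mul_of_nonneg_right (hwb m).1 (abs_nonneg _)
        _ ≤ M := hMm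
    apply Finset.sup'_le
    intro i _
    have hMi : w i * |ystar - x i| ≤ M := by
      exact Finset.le_sup' (fun i => w i * |ystar - x i|) (Finset.mem_univ i)
    have hwi0 : 0 ≤ w i := le_of_lt (lt_of_lt_of_le hminpos (hwb i).1)
    have h1 : |x m - x i| ≤ |ystar - x m| + |ystar - x i| := by
      have := abs_sub_le (x m) ystar (x i)
      rw [abs_sub_comm (x m) ystar] at this
      exact this
    calc w i * |x m - x i| ≤ w i * (|ystar - x m| + |ystar - x i|) :=
          mul_le_mul_of_nonneg_left h1 hwi0
      _ = w i * |ystar - x m| + w i * |ystar - x i| := by ring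
      _ ≤ wmax * (M / wmin) + M :=
          add_le_add (mul_le_mul (hwb i).2 hxm (abs_nonneg _) hmaxpos.le) hMi
      _ = (1 + wmax / wmin) * M := by field_simp; ring
  · intro y
    have habs : 1 ≤ |y - 0| + |y - 1| := by
      have h := abs_sub (y - 0) (y - 1)
      have h2 : |(y - 0) - (y - 1)| = 1 := by norm_num
      linarith
    rw [div_le_iff₀ hspos]
    nlinarith [mul_le_mul_of_nonneg_left (le_max_left (wmin * |y - 0|) (wmax * |y - 1|)) hmaxpos.le,
      mul_le_mul_of_nonneg_left (le_max_right (wmin * |y - 0|) (wmax * |y - 1|)) hminpos.le,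
      mul_le_mul_of_nonneg_left habs (mul_pos hmaxpos hminpos).le]
  · refine ⟨wmax / (wmax + wmin), ?_⟩
    have hy0 : wmin * |wmax / (wmax + wmin) - 0| = wmax * wmin / (wmax + wmin) := by
      rw [sub_zero, abs_of_nonneg (by positivity)]; field_simp
    have hy1 : wmax * |wmax / (wmax + wmin) - 1| = wmax * wmin / (wmax + wmin) := by
      rw [abs_of_nonpos (by rw [sub_nonpos, div_le_one hspos]; linarith)]
      field_simp
      ring
    rw [hy0, hy1, max_self]
  · have h0 : |(0 : ℝ) - 0| = 0 := by norm_num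
    have h1 : |(0 : ℝ) - 1| = 1 := by norm_num
    rw [h0, h1, mul_zero, mul_one]
    exact max_eq_right hmaxpos.le
  · field_simp
    ring
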